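/- Let K be a field with discrete valuation v, residue field of cardinality 2, and v(2) = 4. If τ ∈ K satisfies v(τ) = 1, then v(τ⁴ + 2) ≥ 5. -/

import Mathlib

/-- Let `K` be a field with surjective discrete valuation `v`, residue field of
cardinality 2 (every unit is congruent to 1 modulo the maximal ideal), and
`v 2 = 4`. If `τ ∈ K` satisfies `v τ = 1`, then `v (τ⁴ + 2) ≥ 5`. -/
theorem stmt_12 {K : Type*} [Field K] (v : K → WithTop ℤ)
    (hv0 : ∀ x : K, v x = ⊤ ↔ x = 0)
    (hvmul : ∀ x y : K, v (x * y) = v x + v y)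
    (hvadd : ∀ x y : K, min (v x) (v y) ≤ v (x + y))
    (hsurj : ∀ n : ℤ, ∃ x : K, v x = (n : WithTop ℤ))
    (hres : ∀ x : K, v x = 0 → 0 < v (x - 1))
    (h2 : v 2 = ((4 : ℤ) : WithTop ℤ))
    (τ : K) (hτ : v τ = ((1 : ℤ) : WithTop ℤ)) :
    ((5 : ℤ) : WithTop ℤ) ≤ v (τ ^ 4 + 2) := by
  have h2ne : (2 : K) ≠ 0 := by
    intro h
    rw [← hv0, h2] at h
    exact (by decide : ((4 : ℤ) : WithTop ℤ) ≠ ⊤) h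
  have h1 : v 1 = 0 := by
    have h := hvmul 1 1
    rw [one_mul] at h
    have hne : v 1 ≠ ⊤ := fun h' => one_ne_zero ((hv0 1).mp h')
    cases hv : v 1 with
    | top => exact absurd hv hne
    | coe n =>
      rw [hv] at h
      have : n = n + n := by exact_mod_cast h
      have : n = 0 := by omega
      simp [this]
  have hn1 : v (-1 : K) = 0 := by
    have h := hvmul (-1) (-1)
    rw [neg_mul_neg, one_mul, h1] at h
    have hne : v (-1 : K) ≠ ⊤ := fun h' => neg_ne_zero.mpr one_ne_zero ((hv0 (-1)).mp h')
    cases hv : v (-1 : K) with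
    | top => exact absurd hv hne
    | coe n =>
      rw [hv] at h
      have : (0 : ℤ) = n + n := by exact_mod_cast h
      have : n = 0 := by omega
      simp [this]
  have hinv : v (2⁻¹ : K) = ((-4 : ℤ) : WithTop ℤ) := by
    have h := hvmul 2 2⁻¹
    rw [mul_inv_cancel₀ h2ne, h1, h2] at h
    cases hv : v (2⁻¹ : K) with
    | top =>
      rw [hv] at h; simp at h
    | coe n =>
      rw [hv] at h
      have : (0 : ℤ) = 4 + n := by exact_mod_cast h
      have : n = -4 := by omega
      simp [this]
  have hτ4 : v (τ ^ 4) = ((4 : ℤ) : WithTop ℤ) := by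
    have : τ ^ 4 = τ * τ * τ * τ := by ring
    rw [this, hvmul, hvmul, hvmul, hτ]
    rfl
  set u : K := -(τ ^ 4) * 2⁻¹ with hu
  have hvu : v u = 0 := by
    have hneg : (-(τ ^ 4) : K) = -1 * τ ^ 4 := by ring
    rw [hu, hvmul, hneg, hvmul, hn1, hτ4, hinv]
    rfl
  have hpos := hres u hvu
  have hge1 : ((1 : ℤ) : WithTop ℤ) ≤ v (u - 1) := by
    cases hv : v (u - 1) with
    | top => exact le_top
    | coe n =>
      rw [hv] at hpos
      have : (0 : ℤ) < n := by exact_mod_cast hpos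
      exact_mod_cast this
  have key : τ ^ 4 + 2 = (-1) * 2 * (u - 1) := by
    rw [hu]; field_simp; ring
  rw [key, hvmul, hvmul, hn1, h2, zero_add]
  calc ((5 : ℤ) : WithTop ℤ) = ((4 : ℤ) : WithTop ℤ) + ((1 : ℤ) : WithTop ℤ) := by rfl
    _ ≤ ((4 : ℤ) : WithTop ℤ) + v (u - 1) := add_le_add_right hge1 _
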